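/- Let q be a prime power, n ≥ 2, and let ℓ ∈ N with 2 ≤ ℓ < q. Let g ∈ F_q[s_1,…,s_{n-1}] be a homogeneous polynomial of degree ℓ, and let S ⊆ F_q^n be a BRK-type set of degree ℓ (with respect to g). Then for every k ∈ N that is a multiple of q, setting D = k(q-1) - 1 and M = (ℓ+1)k - 2ℓk/q, one has binom(M+n-1, n) · |S| ≥ binom(D+n, n). -/

import Mathlib

open MvPolynomial

/-- `IsBRKType g ℓ S` : `S` is a BRK-type set of degree `ℓ` with respect to the homogeneous
polynomial `g` of degree `ℓ`: for every `ρ ∈ F_q` there are `a ∈ F_q^n` and a polynomial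
`gρ` whose homogeneous part of highest degree is `g` (i.e. `gρ = g + h` with `deg h < ℓ`)
such that `{a + ρ·(λ, gρ(λ)) : λ ∈ F_q^{n-1}} ⊆ S`. -/
def IsBRKType {F : Type*} [Field F] (n ℓ : ℕ) (g : MvPolynomial (Fin (n - 1)) F)
    (S : Finset (Fin n → F)) : Prop :=
  ∀ ρ : F, ∃ a : Fin n → F, ∃ gρ : MvPolynomial (Fin (n - 1)) F,
    (∃ h : MvPolynomial (Fin (n - 1)) F, gρ = g + h ∧ h.totalDegree < ℓ) ∧
    ∀ lam : Fin (n - 1) → F,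
      (fun i : Fin n => a i + ρ *
        (if hi : (i : ℕ) < n - 1 then lam ⟨i, hi⟩ else MvPolynomial.eval lam gρ)) ∈ S


section AuxiliaryLemmas

open Finset


lemma sz_aux {F : Type*} [Field F] [Fintype F] [DecidableEq F] :
    ∀ (v : ℕ) (p : MvPolynomial (Fin v) F), p ≠ 0 →
      Fintype.card F *
        (Finset.univ.filter fun x : Fin v → F => MvPolynomial.eval x p = 0).card ≤
      p.totalDegree * Fintype.card F ^ v := by
  intro v
  induction v with
  | zero =>
    intro p hp
    have h0 : (Finset.univ.filter fun x : Fin 0 → F => MvPolynomial.eval x p = 0) = ∅ := by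
      rw [Finset.filter_eq_empty_iff]
      intro x _
      rw [eq_C_of_isEmpty p] at hp ⊢
      simpa using fun h => hp (by rw [h, map_zero])
    rw [h0, Finset.card_empty, Nat.mul_zero]
    exact Nat.zero_le _
  | succ v ih =>
    intro p hp
    have hPne : finSuccEquiv F v p ≠ 0 := by
      intro h
      apply hp
      have := congrArg (finSuccEquiv F v).symm h
      simpa using this
    set P := finSuccEquiv F v p with hP
    set q := Fintype.card F with hqdef
    set d₁ := P.natDegree with hd₁
    have hcne : P.coeff d₁ ≠ 0 := by
      rw [hd₁, Polynomial.coeff_natDegree]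
      exact Polynomial.leadingCoeff_ne_zero.mpr hPne
    set c := P.coeff d₁ with hc
    have hdeg : c.totalDegree + d₁ ≤ p.totalDegree :=
      totalDegree_coeff_finSuccEquiv_add_le p d₁ hcne
    -- split the count fiberwise
    have hsplit :
        (Finset.univ.filter fun x : Fin (v+1) → F => MvPolynomial.eval x p = 0).card
          = ∑ y : Fin v → F,
            (Finset.univ.filter fun a : F => MvPolynomial.eval (Fin.cons a y) p = 0).card := by
      rw [Finset.card_eq_sum_card_fiberwise
        (f := fun x : Fin (v+1) → F => Fin.tail x) (t := Finset.univ) (fun x _ => mem_univ _)]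
      refine Finset.sum_congr rfl fun y _ => ?_
      refine Finset.card_bij (fun x _ => x 0) ?_ ?_ ?_
      · intro x hx
        simp only [Finset.mem_filter, Finset.mem_univ, true_and] at hx ⊢
        obtain ⟨h1, h2⟩ := hx
        rw [← h2, Fin.cons_self_tail]
        exact h1
      · intro x hx x' hx' h
        simp only [Finset.mem_filter, Finset.mem_univ, true_and] at hx hx'
        have h2 := hx.2.trans hx'.2.symm
        funext i
        rcases Fin.eq_zero_or_eq_succ i with rfl | ⟨j, rfl⟩
        · exact h
        · exact congrFun h2 j
      · intro a ha
        simp only [Finset.mem_filter, Finset.mem_univ, true_and] at ha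
        refine ⟨Fin.cons a y, ?_, ?_⟩
        · simp only [Finset.mem_filter, Finset.mem_univ, true_and]
          exact ⟨ha, by simp⟩
        · simp
    -- bound each fiber
    have hfiber : ∀ y : Fin v → F,
        (Finset.univ.filter fun a : F => MvPolynomial.eval (Fin.cons a y) p = 0).card ≤
          if MvPolynomial.eval y c = 0 then q else d₁ := by
      intro y
      by_cases hy : MvPolynomial.eval y c = 0
      · rw [if_pos hy]
        calc _ ≤ (Finset.univ : Finset F).card := Finset.card_filter_le _ _
        _ = q := by simp [hqdef]
      · rw [if_neg hy]
        set Q : Polynomial F := P.map (MvPolynomial.eval y) with hQ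
        have hQne : Q ≠ 0 := fun h => hy (by
          have := congrArg (fun r => Polynomial.coeff r d₁) h
          simpa [hQ, Polynomial.coeff_map] using this)
        have hsub : (Finset.univ.filter fun a : F => MvPolynomial.eval (Fin.cons a y) p = 0)
            ⊆ Q.roots.toFinset := by
          intro a ha
          simp only [Finset.mem_filter, Finset.mem_univ, true_and] at ha
          rw [Multiset.mem_toFinset, Polynomial.mem_roots hQne, Polynomial.IsRoot.def, hQ,
            ← eval_eq_eval_mv_eval']
          exact ha
        calc (Finset.univ.filter fun a : F => MvPolynomial.eval (Fin.cons a y) p = 0).card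
            ≤ Q.roots.toFinset.card := Finset.card_le_card hsub
          _ ≤ Multiset.card Q.roots := Multiset.toFinset_card_le _
          _ ≤ Q.natDegree := Polynomial.card_roots' Q
          _ ≤ d₁ := Polynomial.natDegree_map_le

    -- assemble
    set B := Finset.univ.filter fun y : Fin v → F => MvPolynomial.eval y c = 0 with hB
    have hsum : (∑ y : Fin v → F,
        (Finset.univ.filter fun a : F => MvPolynomial.eval (Fin.cons a y) p = 0).card)
          ≤ B.card * q + q ^ v * d₁ := by
      calc _ ≤ ∑ y : Fin v → F, if MvPolynomial.eval y c = 0 then q else d₁ :=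
            Finset.sum_le_sum fun y _ => hfiber y
        _ = B.card * q + (Finset.univ.filter fun y : Fin v → F =>
              ¬ MvPolynomial.eval y c = 0).card * d₁ := by
            rw [Finset.sum_ite, Finset.sum_const, Finset.sum_const, smul_eq_mul, smul_eq_mul, hB]
        _ ≤ B.card * q + q ^ v * d₁ := by
            refine Nat.add_le_add_left (Nat.mul_le_mul_right _ ?_) _
            calc _ ≤ (Finset.univ : Finset (Fin v → F)).card := Finset.card_filter_le _ _
              _ = q ^ v := by simp [hqdef, Fintype.card_fun]
    have hIH : q * B.card ≤ c.totalDegree * q ^ v := ih c hcne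
    calc q * (Finset.univ.filter fun x : Fin (v+1) → F => MvPolynomial.eval x p = 0).card
        = q * ∑ y : Fin v → F,
            (Finset.univ.filter fun a : F => MvPolynomial.eval (Fin.cons a y) p = 0).card := by
          rw [hsplit]
      _ ≤ q * (B.card * q + q ^ v * d₁) := Nat.mul_le_mul_left _ hsum
      _ = (q * B.card) * q + d₁ * (q ^ v * q) := by ring
      _ ≤ (c.totalDegree * q ^ v) * q + d₁ * (q ^ v * q) := by
          exact Nat.add_le_add_right (Nat.mul_le_mul_right _ hIH) _
      _ = (c.totalDegree + d₁) * q ^ (v + 1) := by rw [pow_succ]; ring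
      _ ≤ p.totalDegree * q ^ (v + 1) := Nat.mul_le_mul_right _ hdeg


lemma bonf_aux {α β : Type*} [DecidableEq α] [DecidableEq β] (A : α → Finset β) :
    ∀ s : Finset α,
      2 * ∑ i ∈ s, (A i).card ≤
        2 * (s.biUnion A).card + ∑ p ∈ s.offDiag, ((A p.1) ∩ (A p.2)).card := by
  intro s
  induction s using Finset.induction_on with
  | empty => simp
  | insert a s ha ih =>
    rw [Finset.sum_insert ha, Finset.biUnion_insert, Finset.offDiag_insert (a := a) ha]
    have hdisj1 : Disjoint (s.offDiag ∪ {a} ×ˢ s) (s ×ˢ {a}) := by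
      rw [Finset.disjoint_left]
      rintro ⟨x, y⟩ hx hy
      simp only [Finset.mem_union, Finset.mem_offDiag, Finset.mem_product,
        Finset.mem_singleton] at hx hy
      rcases hx with ⟨_, hx2, _⟩ | ⟨hx1, _⟩
      · exact ha (hy.2 ▸ hx2)
      · exact ha (hx1 ▸ hy.1)
    have hdisj2 : Disjoint (s.offDiag) ({a} ×ˢ s) := by
      rw [Finset.disjoint_left]
      rintro ⟨x, y⟩ hx hy
      simp only [Finset.mem_offDiag, Finset.mem_product, Finset.mem_singleton] at hx hy
      exact ha (hy.1 ▸ hx.1)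
    rw [Finset.sum_union hdisj1, Finset.sum_union hdisj2, Finset.sum_product,
      Finset.sum_product]
    simp only [Finset.sum_singleton]
    have hsymm : (∑ i ∈ s, ((A i) ∩ (A a)).card) = ∑ i ∈ s, ((A a) ∩ (A i)).card := by
      refine Finset.sum_congr rfl fun i _ => by rw [Finset.inter_comm]
    rw [hsymm]
    have hcap : ((A a) ∩ (s.biUnion A)).card ≤ ∑ i ∈ s, ((A a) ∩ (A i)).card := by
      have : (A a) ∩ (s.biUnion A) = s.biUnion (fun i => (A a) ∩ (A i)) := by
        ext x; simp [Finset.mem_biUnion]; tauto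
      rw [this]
      exact Finset.card_biUnion_le
    have hunion : ((A a) ∪ (s.biUnion A)).card + ((A a) ∩ (s.biUnion A)).card
        = (A a).card + (s.biUnion A).card := Finset.card_union_add_card_inter _ _
    omega


variable {F : Type*} [Field F] {ι : Type*} [DecidableEq ι]

lemma natcast_eq_C (n : ℕ) : (n : MvPolynomial ι F) = C (n : F) :=
  (map_natCast (C : F →+* MvPolynomial ι F) n).symm

/-- factor decomposition: `(C b + C c * X j)^k = (C c * X j)^k + E` with `deg E ≤ k - 1`. -/
lemma factor_decomp (b c : F) (j : ι) (k : ℕ) :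
    ∃ E : MvPolynomial ι F, (C b + C c * X j) ^ k = (C c * X j) ^ k + E ∧
      E.totalDegree ≤ k - 1 := by
  refine ⟨∑ i ∈ Finset.range k,
    (C c * X j) ^ i * (C b) ^ (k - i) * C ((k.choose i : ℕ) : F), ?_, ?_⟩
  · rw [add_comm (C b) (C c * X j), add_pow, Finset.sum_range_succ]
    simp [← natcast_eq_C, add_comm]
  · refine (totalDegree_finset_sum _ _).trans (Finset.sup_le fun i hi => ?_)
    rw [Finset.mem_range] at hi
    calc ((C c * X j) ^ i * C b ^ (k - i) * C ((k.choose i : ℕ) : F)).totalDegree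
        ≤ ((C c * X j) ^ i * C b ^ (k - i)).totalDegree
            + (C ((k.choose i : ℕ) : F) : MvPolynomial ι F).totalDegree := totalDegree_mul _ _
      _ ≤ ((C c * X j) ^ i).totalDegree + (C b ^ (k - i)).totalDegree + 0 := by
          rw [totalDegree_C]
          exact Nat.add_le_add_right (totalDegree_mul _ _) 0
      _ ≤ i * (C c * X j).totalDegree + (k - i) * (C b).totalDegree + 0 :=
          Nat.add_le_add_right (Nat.add_le_add (totalDegree_pow _ _) (totalDegree_pow _ _)) 0
      _ ≤ i * 1 + (k - i) * 0 + 0 := by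
          refine Nat.add_le_add_right (Nat.add_le_add (Nat.mul_le_mul_left _ ?_)
            (Nat.mul_le_mul_left _ ?_)) 0
          · calc (C c * X j).totalDegree ≤ (C c).totalDegree + (X j).totalDegree :=
                totalDegree_mul _ _
              _ ≤ 1 := by rw [totalDegree_C, totalDegree_X]
          · rw [totalDegree_C]
      _ ≤ k - 1 := by omega
lemma hc_prod (b : ι → F) (c : F) (m : ι →₀ ℕ) :
    homogeneousComponent (m.sum fun _ e => e)
        (∏ j ∈ m.support, (C (b j) + C c * X j) ^ m j) =
      monomial m (c ^ (m.sum fun _ e => e)) := by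
  classical
  set d := m.sum fun _ e => e with hd
  choose E hE hEdeg using fun j : ι => factor_decomp (F := F) (b j) c j (m j)
  have hrw : ∏ j ∈ m.support, (C (b j) + C c * X j) ^ m j
      = ∏ j ∈ m.support, ((C c * X j) ^ m j + E j) :=
    Finset.prod_congr rfl fun j _ => hE j
  rw [hrw, Finset.prod_add]
  rw [map_sum]
  -- top term: t = m.support
  have htop : (∏ j ∈ m.support, (C c * X j) ^ m j) = monomial m (c ^ d) := by
    have h1 : ∀ j ∈ m.support, (C c * X j) ^ m j = C (c ^ m j) * X j ^ m j := fun j _ => by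
      rw [mul_pow, C_pow]
    rw [Finset.prod_congr rfl h1, Finset.prod_mul_distrib, ← map_prod,
      Finset.prod_pow_eq_pow_sum, monomial_eq]
    rfl
  have hmem : m.support ∈ m.support.powerset := Finset.mem_powerset_self _
  rw [Finset.sum_eq_single_of_mem _ hmem]
  · rw [Finset.sdiff_self, Finset.prod_empty, mul_one, htop]
    have hmono : (monomial m (c ^ d)) ∈ homogeneousSubmodule ι F d := by
      rw [mem_homogeneousSubmodule]
      exact isHomogeneous_monomial _ rfl
    rw [homogeneousComponent_of_mem hmono, if_pos rfl]
  · intro t ht hne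
    rw [Finset.mem_powerset] at ht
    apply homogeneousComponent_eq_zero
    -- total degree of the cross term is < d
    obtain ⟨j₀, hj₀⟩ : (m.support \ t).Nonempty := by
      rw [Finset.sdiff_nonempty]
      exact fun h => hne (Finset.Subset.antisymm ht h)
    have hdeg1 : (∏ j ∈ t, (C c * X j) ^ m j).totalDegree ≤ ∑ j ∈ t, m j := by
      refine (totalDegree_finset_prod _ _).trans (Finset.sum_le_sum fun j _ => ?_)
      calc ((C c * X j) ^ m j).totalDegree ≤ m j * (C c * X j).totalDegree :=
          totalDegree_pow _ _
        _ ≤ m j * 1 := Nat.mul_le_mul_left _ (by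
            calc (C c * X j).totalDegree ≤ (C c).totalDegree + (X j).totalDegree :=
                totalDegree_mul _ _
              _ ≤ 1 := by rw [totalDegree_C, totalDegree_X])
        _ = m j := Nat.mul_one _
    have hdeg2 : (∏ j ∈ m.support \ t, E j).totalDegree ≤ ∑ j ∈ m.support \ t, (m j - 1) :=
      (totalDegree_finset_prod _ _).trans (Finset.sum_le_sum fun j _ => hEdeg j)
    have hlt : (∑ j ∈ t, m j) + (∑ j ∈ m.support \ t, (m j - 1)) < d := by
      have hsplit : (∑ j ∈ m.support \ t, m j) + (∑ j ∈ t, m j) = d := by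
        rw [hd, Finsupp.sum, Finset.sum_sdiff ht]
      have hpos : ∀ j ∈ m.support \ t, 1 ≤ m j := fun j hj => by
        have := Finset.mem_sdiff.mp hj
        exact Nat.one_le_iff_ne_zero.mpr (Finsupp.mem_support_iff.mp this.1)
      have hcard : 1 ≤ (m.support \ t).card := Finset.card_pos.mpr ⟨j₀, hj₀⟩
      have hsum : (∑ j ∈ m.support \ t, m j)
          = (∑ j ∈ m.support \ t, (m j - 1)) + (m.support \ t).card := by
        have h := Finset.sum_congr rfl fun j hj => (Nat.sub_add_cancel (hpos j hj)).symm
        rw [h, Finset.sum_add_distrib, Finset.sum_const, smul_eq_mul, mul_one]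
      omega
    calc ((∏ j ∈ t, (C c * X j) ^ m j) * ∏ j ∈ m.support \ t, E j).totalDegree
        ≤ _ + _ := totalDegree_mul _ _
      _ ≤ (∑ j ∈ t, m j) + (∑ j ∈ m.support \ t, (m j - 1)) := Nat.add_le_add hdeg1 hdeg2
      _ < d := hlt

lemma hc_main (b : ι → F) (c : F) (d : ℕ) (p : MvPolynomial ι F) (hp : p.totalDegree ≤ d) :
    homogeneousComponent d (bind₁ (fun i => C (b i) + C c * X i) p) =
      c ^ d • homogeneousComponent d p := by
  conv_lhs => rw [p.as_sum]
  conv_rhs => rw [p.as_sum]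
  rw [map_sum, map_sum, map_sum, Finset.smul_sum]
  refine Finset.sum_congr rfl fun m hm => ?_
  have hmle : (m.sum fun _ e => e) ≤ d := (le_totalDegree hm).trans hp
  rw [bind₁_monomial]
  rcases eq_or_lt_of_le hmle with heq | hlt
  · -- degree exactly d
    have hprod := hc_prod b c m
    rw [heq] at hprod
    rw [homogeneousComponent_C_mul, hprod, C_mul_monomial]
    have hmono : (monomial m (coeff m p)) ∈ homogeneousSubmodule ι F d := by
      rw [mem_homogeneousSubmodule]
      exact isHomogeneous_monomial _ (heq ▸ rfl)
    rw [homogeneousComponent_of_mem hmono, if_pos rfl, smul_monomial]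
    rw [smul_eq_mul, mul_comm]
  · -- degree < d : both sides vanish
    have h1 : (C (coeff m p) *
        ∏ i ∈ m.support, (C (b i) + C c * X i) ^ m i).totalDegree < d := by
      calc (C (coeff m p) * ∏ i ∈ m.support, (C (b i) + C c * X i) ^ m i).totalDegree
          ≤ (C (coeff m p)).totalDegree
            + (∏ i ∈ m.support, (C (b i) + C c * X i) ^ m i).totalDegree := totalDegree_mul _ _
        _ ≤ 0 + ∑ j ∈ m.support, m j := by
            refine Nat.add_le_add (le_of_eq (totalDegree_C _)) ?_
            refine (totalDegree_finset_prod _ _).trans (Finset.sum_le_sum fun j _ => ?_)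
            calc ((C (b j) + C c * X j) ^ m j).totalDegree
                ≤ m j * (C (b j) + C c * X j).totalDegree := totalDegree_pow _ _
              _ ≤ m j * 1 := by
                  refine Nat.mul_le_mul_left _ ?_
                  refine (totalDegree_add _ _).trans (max_le (by rw [totalDegree_C]; omega) ?_)
                  calc (C c * X j).totalDegree ≤ (C c).totalDegree + (X j).totalDegree :=
                      totalDegree_mul _ _
                    _ ≤ 1 := by rw [totalDegree_C, totalDegree_X]
              _ = m j := Nat.mul_one _
        _ < d := by simpa [Finsupp.sum] using hlt
    have h2 : (monomial m (coeff m p)).totalDegree < d :=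
      lt_of_le_of_lt (totalDegree_monomial_le _ _) hlt
    rw [homogeneousComponent_eq_zero _ _ h1, homogeneousComponent_eq_zero _ _ h2, smul_zero]

lemma asc_le (l q' : ℕ) : ∀ (N a b : ℕ), (∀ i, i < N → l * (a + i) ≤ q' * (b + i)) →
    l ^ N * a.ascFactorial N ≤ q' ^ N * b.ascFactorial N := by
  intro N
  induction N with
  | zero => simp
  | succ N ih =>
    intro a b h
    rw [Nat.ascFactorial_succ, Nat.ascFactorial_succ, pow_succ, pow_succ]
    calc l ^ N * l * ((a + N) * a.ascFactorial N)
        = (l * (a + N)) * (l ^ N * a.ascFactorial N) := by ring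
      _ ≤ (q' * (b + N)) * (q' ^ N * b.ascFactorial N) :=
          Nat.mul_le_mul (h N (Nat.lt_succ_self N)) (ih a b fun i hi => h i (hi.trans (Nat.lt_succ_self N)))
      _ = q' ^ N * q' * ((b + N) * b.ascFactorial N) := by ring

lemma choose_transfer (l q' D M n : ℕ)
    (h : ∀ i, i < n → l * (D + 1 + i) ≤ q' * (M + i)) :
    l ^ n * (D + n).choose n ≤ q' ^ n * (M + n - 1).choose n := by
  have h1 := asc_le l q' n (D + 1) M h
  rw [Nat.ascFactorial_eq_factorial_mul_choose, Nat.ascFactorial_eq_factorial_mul_choose'] at h1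
  have h2 : n.factorial * (l ^ n * (D + n).choose n)
      ≤ n.factorial * (q' ^ n * (M + n - 1).choose n) := by
    calc n.factorial * (l ^ n * (D + n).choose n)
        = l ^ n * (n.factorial * (D + n).choose n) := by ring
      _ ≤ q' ^ n * (n.factorial * (M + n - 1).choose n) := h1
      _ = n.factorial * (q' ^ n * (M + n - 1).choose n) := by ring
  exact Nat.le_of_mul_le_mul_left h2 n.factorial_pos


section helpers

variable {F : Type*} [Field F] {ι : Type*}

lemma eval_bind₁' (A : ι → MvPolynomial ι F) (p : MvPolynomial ι F) (lam : ι → F) :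
    eval lam (bind₁ A p) = eval (fun i => eval lam (A i)) p := by
  have h := eval₂Hom_bind₁ (RingHom.id F) lam A p
  rw [MvPolynomial.eval]
  exact h

lemma totalDegree_bind₁_affine (A : ι → MvPolynomial ι F)
    (hA : ∀ j, (A j).totalDegree ≤ 1) (p : MvPolynomial ι F) :
    (bind₁ A p).totalDegree ≤ p.totalDegree := by
  conv_lhs => rw [p.as_sum]
  rw [map_sum]
  refine (totalDegree_finset_sum _ _).trans (Finset.sup_le fun m hm => ?_)
  rw [bind₁_monomial]
  calc (C (coeff m p) * ∏ i ∈ m.support, A i ^ m i).totalDegree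
      ≤ (C (coeff m p)).totalDegree
          + (∏ i ∈ m.support, A i ^ m i).totalDegree := totalDegree_mul _ _
    _ ≤ 0 + ∑ j ∈ m.support, m j := by
        refine Nat.add_le_add (le_of_eq (totalDegree_C _)) ?_
        refine (totalDegree_finset_prod _ _).trans (Finset.sum_le_sum fun j _ => ?_)
        calc (A j ^ m j).totalDegree ≤ m j * (A j).totalDegree := totalDegree_pow _ _
          _ ≤ m j * 1 := Nat.mul_le_mul_left _ (hA j)
          _ = m j := Nat.mul_one _
    _ ≤ p.totalDegree := by simpa [Finsupp.sum] using le_totalDegree hm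

end helpers

end AuxiliaryLemmas

set_option maxHeartbeats 2000000 in
/-- Quantitative form of the main theorem: for a BRK-type set `S ⊆ F_q^n` of degree `ℓ`
(`2 ≤ ℓ < q`), every positive multiple `k` of `q`, `D = k(q-1) - 1` and
`M = (ℓ+1)k - 2ℓk/q` satisfy `binom(M+n-1, n) · |S| ≥ binom(D+n, n)`. -/
theorem brk_type_set_binomial_bound {F : Type*} [Field F] [Fintype F] (q n ℓ : ℕ)
    (hq : Fintype.card F = q) (hn : 2 ≤ n) (hℓ : 2 ≤ ℓ) (hℓq : ℓ < q)
    (g : MvPolynomial (Fin (n - 1)) F) (hg0 : g ≠ 0) (hg : g.IsHomogeneous ℓ)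
    (S : Finset (Fin n → F)) (hS : IsBRKType n ℓ g S)
    (k : ℕ) (hk : 0 < k) (hkq : q ∣ k)
    (D M : ℕ) (hD : D = k * (q - 1) - 1) (hM : M = (ℓ + 1) * k - 2 * ℓ * k / q) :
    Nat.choose (D + n) n ≤ Nat.choose (M + n - 1) n * S.card := by
  classical
  have hq3 : 3 ≤ q := by omega
  have hq0 : 0 < q := by omega
  obtain ⟨m, hkm⟩ := hkq
  have hm1 : 1 ≤ m := by
    rcases Nat.eq_zero_or_pos m with h | h
    · rw [h, Nat.mul_zero] at hkm; omega
    · exact h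
  -- basic identities for D and M
  have hDk : D + 1 = k * (q - 1) := by
    have : 0 < k * (q - 1) := Nat.mul_pos hk (by omega)
    omega
  have hdiv : 2 * ℓ * k / q = 2 * ℓ * m := by
    rw [hkm]
    calc 2 * ℓ * (q * m) / q = q * (2 * ℓ * m) / q := by ring_nf
      _ = 2 * ℓ * m := Nat.mul_div_cancel_left _ hq0
  have hMk : M + 2 * ℓ * m = (ℓ + 1) * k := by
    rw [hM, hdiv]
    have h1 : 2 * ℓ + 1 ≤ (ℓ + 1) * q := by nlinarith
    have h2 : 2 * ℓ * m + m ≤ (ℓ + 1) * q * m := by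
      calc 2 * ℓ * m + m = (2 * ℓ + 1) * m := by ring
        _ ≤ ((ℓ + 1) * q) * m := Nat.mul_le_mul_right m h1
        _ = (ℓ + 1) * q * m := by ring
    have h3 : (ℓ + 1) * k = (ℓ + 1) * q * m := by rw [hkm]; ring
    omega
  -- Part 1 : binomial comparison
  have part1 : ℓ ^ n * (D + n).choose n ≤ q ^ n * (M + n - 1).choose n := by
    refine choose_transfer ℓ q D M n fun i _ => ?_
    -- ℓ * (D + 1 + i) ≤ q * (M + i)
    have e1 : D + 1 + k = k * q := by
      have h1 : k * (q - 1) + k = k * q := by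
        conv_rhs => rw [show q = (q - 1) + 1 by omega]
        rw [Nat.mul_add, Nat.mul_one]
      omega
    zify
    zify at e1 hMk
    nlinarith [e1, hMk, hkm, hm1, hℓq, hq3, hk]
  -- Part 2 : lower bound on S.card
  -- set up the curves
  choose a G hGd hGmem using hS
  have htg : g.totalDegree = ℓ := hg.totalDegree hg0
  set e : Fin (n-1) → Fin n := fun j => ⟨j.1, lt_of_lt_of_le j.2 (Nat.sub_le n 1)⟩ with he
  set last : Fin n := ⟨n-1, by omega⟩ with hlast
  set φ : F → (Fin (n-1) → F) → (Fin n → F) := fun ρ lam i =>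
    a ρ i + ρ * (if hi : (i:ℕ) < n-1 then lam ⟨i, hi⟩ else MvPolynomial.eval lam (G ρ)) with hφ
  set Cur : F → Finset (Fin n → F) := fun ρ => Finset.image (φ ρ) Finset.univ with hCur
  have hCS : ∀ ρ, Cur ρ ⊆ S := by
    intro ρ x hx
    obtain ⟨lam, -, hlam⟩ := Finset.mem_image.mp hx
    rw [← hlam]
    exact hGmem ρ lam
  have hφe : ∀ (ρ : F) lam (j : Fin (n-1)), φ ρ lam (e j) = a ρ (e j) + ρ * lam j := by
    intro ρ lam j
    show a ρ (e j) + ρ * (if hi : ((e j : Fin n) : ℕ) < n-1 then lam ⟨(e j : Fin n), hi⟩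
      else MvPolynomial.eval lam (G ρ)) = _
    rw [dif_pos (show ((e j : Fin n) : ℕ) < n - 1 from j.2)]
  have hφlast : ∀ (ρ : F) lam, φ ρ lam last = a ρ last + ρ * MvPolynomial.eval lam (G ρ) := by
    intro ρ lam
    show a ρ last + ρ * (if hi : ((last : Fin n) : ℕ) < n-1 then lam ⟨(last : Fin n), hi⟩
      else MvPolynomial.eval lam (G ρ)) = _
    rw [dif_neg (show ¬ ((last : Fin n) : ℕ) < n - 1 by simp [hlast])]
  have hinj : ∀ ρ : F, ρ ≠ 0 → Function.Injective (φ ρ) := by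
    intro ρ hρ lam lam' hfeq
    funext j
    have h1 := congrFun hfeq (e j)
    rw [hφe, hφe] at h1
    exact mul_left_cancel₀ hρ (add_left_cancel h1)
  have hcard : ∀ ρ : F, ρ ≠ 0 → (Cur ρ).card = q ^ (n-1) := by
    intro ρ hρ
    rw [hCur]
    rw [Finset.card_image_of_injective _ (hinj ρ hρ), Finset.card_univ, Fintype.card_fun,
      Fintype.card_fin, hq]
  set ψ : F → (Fin n → F) → (Fin (n-1) → F) := fun ρ x j => ρ⁻¹ * (x (e j) - a ρ (e j)) with hψ
  have hψφ : ∀ ρ : F, ρ ≠ 0 → ∀ lam, ψ ρ (φ ρ lam) = lam := by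
    intro ρ hρ lam
    funext j
    show ρ⁻¹ * (φ ρ lam (e j) - a ρ (e j)) = lam j
    rw [hφe, add_sub_cancel_left, inv_mul_cancel_left₀ hρ]
  -- intersection bound
  have hint : ∀ ρ σ : F, ρ ≠ 0 → σ ≠ 0 → ρ ^ (ℓ-1) ≠ σ ^ (ℓ-1) →
      q * ((Cur ρ) ∩ (Cur σ)).card ≤ ℓ * q ^ (n-1) := by
    intro ρ σ hρ hσ hpow
    set c : F := ρ * σ⁻¹ with hc
    set b : Fin (n-1) → F := fun j => σ⁻¹ * (a ρ (e j) - a σ (e j)) with hb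
    set A : Fin (n-1) → MvPolynomial (Fin (n-1)) F := fun j => C (b j) + C c * X j with hA
    set P : MvPolynomial (Fin (n-1)) F :=
      (C (a ρ last) + C ρ * G ρ) - (C (a σ last) + C σ * bind₁ A (G σ)) with hP
    obtain ⟨hρh, hGρ, hhρ⟩ := hGd ρ
    obtain ⟨hσh, hGσ, hhσ⟩ := hGd σ
    have htGρ : (G ρ).totalDegree ≤ ℓ := by
      rw [hGρ]
      exact (totalDegree_add _ _).trans (max_le htg.le hhρ.le)
    have htGσ : (G σ).totalDegree ≤ ℓ := by
      rw [hGσ]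
      exact (totalDegree_add _ _).trans (max_le htg.le hhσ.le)
    have htA : ∀ j, (A j).totalDegree ≤ 1 := by
      intro j
      rw [hA]
      refine (totalDegree_add _ _).trans (max_le (by rw [totalDegree_C]; omega) ?_)
      calc (C c * X j).totalDegree ≤ (C c).totalDegree + (X j).totalDegree :=
          totalDegree_mul _ _
        _ ≤ 1 := by rw [totalDegree_C, totalDegree_X]
    have htP : P.totalDegree ≤ ℓ := by
      rw [hP]
      refine (totalDegree_sub _ _).trans (max_le ?_ ?_)
      · refine (totalDegree_add _ _).trans (max_le (by rw [totalDegree_C]; omega) ?_)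
        calc (C ρ * G ρ).totalDegree ≤ (C ρ).totalDegree + (G ρ).totalDegree :=
            totalDegree_mul _ _
          _ ≤ ℓ := by rw [totalDegree_C]; omega
      · refine (totalDegree_add _ _).trans (max_le (by rw [totalDegree_C]; omega) ?_)
        calc (C σ * bind₁ A (G σ)).totalDegree
            ≤ (C σ).totalDegree + (bind₁ A (G σ)).totalDegree := totalDegree_mul _ _
          _ ≤ 0 + ℓ := Nat.add_le_add (le_of_eq (totalDegree_C _))
              ((totalDegree_bind₁_affine A htA (G σ)).trans htGσ)
          _ = ℓ := Nat.zero_add _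
    have hgmem : g ∈ homogeneousSubmodule (Fin (n-1)) F ℓ := by
      rw [mem_homogeneousSubmodule]; exact hg
    have hcompρ : homogeneousComponent ℓ (G ρ) = g := by
      rw [hGρ, map_add, homogeneousComponent_of_mem hgmem, if_pos rfl,
        homogeneousComponent_eq_zero _ _ hhρ, add_zero]
    have hcompσ : homogeneousComponent ℓ (G σ) = g := by
      rw [hGσ, map_add, homogeneousComponent_of_mem hgmem, if_pos rfl,
        homogeneousComponent_eq_zero _ _ hhσ, add_zero]
    have hCcomp : ∀ x : F, homogeneousComponent ℓ (C x : MvPolynomial (Fin (n-1)) F) = 0 := by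
      intro x
      exact homogeneousComponent_eq_zero _ _ (by rw [totalDegree_C]; omega)
    have hcomp : homogeneousComponent ℓ P = (ρ - σ * c ^ ℓ) • g := by
      rw [hP, map_sub, map_add, map_add, homogeneousComponent_C_mul,
        homogeneousComponent_C_mul, hc_main b c ℓ (G σ) htGσ, hcompρ, hcompσ,
        hCcomp (a ρ last), hCcomp (a σ last), zero_add, zero_add, C_mul', C_mul',
        smul_smul, ← sub_smul]
    have hcne : (ρ - σ * c ^ ℓ) ≠ 0 := by
      intro h0
      apply hpow
      have h1 : ρ = σ * c ^ ℓ := sub_eq_zero.mp h0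
      rw [hc, mul_pow, inv_pow] at h1
      have hσl : (σ : F) ^ ℓ ≠ 0 := pow_ne_zero _ hσ
      have h2 : ρ * σ ^ ℓ = σ * ρ ^ ℓ := by
        calc ρ * σ ^ ℓ = σ * (ρ ^ ℓ * (σ ^ ℓ)⁻¹) * σ ^ ℓ := by rw [← h1]
          _ = σ * ρ ^ ℓ := by field_simp
      have hl1 : ℓ - 1 + 1 = ℓ := by omega
      rw [← hl1, pow_succ, pow_succ] at h2
      have h3 : (ρ * σ) * ρ ^ (ℓ - 1) = (ρ * σ) * σ ^ (ℓ - 1) := by linear_combination -h2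
      exact mul_left_cancel₀ (mul_ne_zero hρ hσ) h3
    have hPne : P ≠ 0 := by
      intro h0
      rw [h0, map_zero] at hcomp
      exact smul_ne_zero hcne hg0 hcomp.symm
    -- inject the intersection into the zero set of P
    have hsub2 : ((Cur ρ) ∩ (Cur σ)).card ≤
        (Finset.univ.filter fun lam : Fin (n-1) → F => MvPolynomial.eval lam P = 0).card := by
      refine Finset.card_le_card_of_injOn (ψ ρ) ?_ ?_
      · intro x hx
        rw [Finset.mem_coe, Finset.mem_inter] at hx
        obtain ⟨lam, -, hlam⟩ := Finset.mem_image.mp hx.1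
        obtain ⟨mu, -, hmu⟩ := Finset.mem_image.mp hx.2
        have hψx : ψ ρ x = lam := by rw [← hlam, hψφ ρ hρ]
        rw [Finset.mem_coe, Finset.mem_filter]
        refine ⟨Finset.mem_univ _, ?_⟩
        rw [hψx]
        have hmuj : ∀ j, mu j = b j + c * lam j := by
          intro j
          have h1 := congrFun (hmu.trans hlam.symm) (e j)
          rw [hφe, hφe] at h1
          have h2 : σ * mu j = a ρ (e j) - a σ (e j) + ρ * lam j := by linear_combination h1
          rw [hb, hc]
          calc mu j = σ⁻¹ * (σ * mu j) := by rw [inv_mul_cancel_left₀ hσ]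
            _ = σ⁻¹ * (a ρ (e j) - a σ (e j) + ρ * lam j) := by rw [h2]
            _ = σ⁻¹ * (a ρ (e j) - a σ (e j)) + ρ * σ⁻¹ * lam j := by ring
        have hlastρ : x last = a ρ last + ρ * MvPolynomial.eval lam (G ρ) := by
          rw [← hlam, hφlast]
        have hlastσ : x last = a σ last + σ * MvPolynomial.eval mu (G σ) := by
          rw [← hmu, hφlast]
        have hbind : MvPolynomial.eval lam (bind₁ A (G σ)) = MvPolynomial.eval mu (G σ) := by
          rw [eval_bind₁']
          have hfun : (fun i => MvPolynomial.eval lam (A i)) = mu := by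
            funext j
            rw [hA]
            simp only [map_add, eval_C, eval_mul, eval_X]
            exact (hmuj j).symm
          rw [hfun]
        rw [hP, map_sub, map_add, map_add, eval_C, eval_C, eval_mul, eval_mul, eval_C, eval_C,
          hbind, ← hlastρ, ← hlastσ, sub_self]
      · intro x hx y hy hxy
        rw [Finset.mem_coe, Finset.mem_inter] at hx hy
        obtain ⟨lam, -, hlam⟩ := Finset.mem_image.mp hx.1
        obtain ⟨lam', -, hlam'⟩ := Finset.mem_image.mp hy.1
        rw [← hlam, ← hlam', hψφ ρ hρ, hψφ ρ hρ] at hxy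
        rw [← hlam, ← hlam', hxy]
    have hsz := sz_aux (n-1) P hPne
    rw [hq] at hsz
    calc q * ((Cur ρ) ∩ (Cur σ)).card ≤ q * _ := Nat.mul_le_mul_left _ hsub2
      _ ≤ P.totalDegree * q ^ (n-1) := hsz
      _ ≤ ℓ * q ^ (n-1) := Nat.mul_le_mul_right _ htP
  -- representatives of distinct (ℓ-1)-th power classes
  set W : Finset F := (Finset.univ.erase (0:F)).image (fun x => x ^ (ℓ-1)) with hW
  have hWprop : ∀ w ∈ W, ∃ x : F, x ≠ 0 ∧ x ^ (ℓ-1) = w := by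
    intro w hw
    rw [hW, Finset.mem_image] at hw
    obtain ⟨x, hx, hxw⟩ := hw
    exact ⟨x, Finset.ne_of_mem_erase hx, hxw⟩
  set r : F → F := fun w => if h : ∃ x : F, x ≠ 0 ∧ x ^ (ℓ-1) = w then h.choose else 1 with hr
  have hrprop : ∀ w ∈ W, r w ≠ 0 ∧ (r w) ^ (ℓ-1) = w := by
    intro w hw
    have h := hWprop w hw
    rw [hr]
    simp only [dif_pos h]
    exact h.choose_spec
  -- lower bound on the number of classes
  have hWq : q - 1 ≤ (ℓ - 1) * W.card := by
    have hfib : ∀ w ∈ (Finset.univ.erase (0:F)).image (fun x => x ^ (ℓ-1)),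
        ((Finset.univ.erase (0:F)).filter fun x => x ^ (ℓ-1) = w).card ≤ ℓ - 1 := by
      intro w _
      have hpne : (Polynomial.X ^ (ℓ-1) - Polynomial.C w : Polynomial F) ≠ 0 :=
        Polynomial.X_pow_sub_C_ne_zero (by omega) w
      have hsubr : ((Finset.univ.erase (0:F)).filter fun x => x ^ (ℓ-1) = w) ⊆
          (Polynomial.X ^ (ℓ-1) - Polynomial.C w : Polynomial F).roots.toFinset := by
        intro x hx
        rw [Finset.mem_filter] at hx
        rw [Multiset.mem_toFinset, Polynomial.mem_roots hpne, Polynomial.IsRoot.def]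
        simp [hx.2]
      calc ((Finset.univ.erase (0:F)).filter fun x => x ^ (ℓ-1) = w).card
          ≤ _ := Finset.card_le_card hsubr
        _ ≤ Multiset.card (Polynomial.X ^ (ℓ-1) - Polynomial.C w : Polynomial F).roots :=
            Multiset.toFinset_card_le _
        _ ≤ (Polynomial.X ^ (ℓ-1) - Polynomial.C w : Polynomial F).natDegree :=
            Polynomial.card_roots' _
        _ ≤ ℓ - 1 := by rw [Polynomial.natDegree_X_pow_sub_C]
    have h := Finset.card_le_mul_card_image (Finset.univ.erase (0:F)) (ℓ-1) hfib
    rw [Finset.card_erase_of_mem (Finset.mem_univ _), Finset.card_univ, hq] at h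
    rw [hW]
    exact h
  -- choose t
  set t : ℕ := if ℓ ∣ q then q / ℓ else q / ℓ + 1 with ht
  have hdivle : ℓ * (q / ℓ) ≤ q := Nat.mul_div_le q ℓ
  have hmodlt : q < ℓ * (q / ℓ) + ℓ := by
    have h1 := Nat.div_add_mod q ℓ
    have h2 : q % ℓ < ℓ := Nat.mod_lt _ (by omega)
    omega
  have htq : q ≤ t * ℓ := by
    rw [ht]
    split_ifs with hdvd
    · rw [Nat.div_mul_cancel hdvd]
    · have h3 : (q / ℓ + 1) * ℓ = ℓ * (q / ℓ) + ℓ := by ring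
      omega
  have htq2 : (t - 1) * ℓ + 1 ≤ q := by
    rw [ht]
    split_ifs with hdvd
    · have h1 : q / ℓ ≥ 2 := by
        by_contra h
        push_neg at h
        have h2 : q / ℓ ≤ 1 := by omega
        have h3 : ℓ * (q / ℓ) ≤ ℓ * 1 := Nat.mul_le_mul_left _ h2
        have h4 : q = ℓ * (q / ℓ) := (Nat.mul_div_cancel' hdvd).symm
        omega
      have h5 : (q / ℓ - 1) * ℓ = ℓ * (q / ℓ) - ℓ := by
        rw [Nat.sub_one_mul, Nat.mul_comm]
      have h4 : q = ℓ * (q / ℓ) := (Nat.mul_div_cancel' hdvd).symm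
      omega
    · have h6 : ℓ * (q / ℓ) ≠ q := by
        intro h
        exact hdvd ⟨q / ℓ, h.symm⟩
      simp only [Nat.add_sub_cancel]
      calc (q / ℓ) * ℓ + 1 = ℓ * (q / ℓ) + 1 := by ring_nf
        _ ≤ q := by omega
  have ht2 : 2 ≤ t := by
    rw [ht]
    have : 1 ≤ q / ℓ := (Nat.one_le_div_iff (by omega)).mpr (by omega)
    split_ifs with hdvd
    · by_contra h
      push_neg at h
      have h2 : q / ℓ ≤ 1 := by omega
      have h3 : ℓ * (q / ℓ) ≤ ℓ * 1 := Nat.mul_le_mul_left _ h2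
      have h4 : q = ℓ * (q / ℓ) := (Nat.mul_div_cancel' hdvd).symm
      omega
    · omega
  have htW : t ≤ W.card := by
    by_contra h
    push_neg at h
    have h1 : W.card ≤ t - 1 := by omega
    have h2 : q - 1 ≤ (ℓ - 1) * (t - 1) := hWq.trans (Nat.mul_le_mul_left _ h1)
    have h3 : (t - 1) * (ℓ - 1) < (t - 1) * ℓ := by
      have h4 : (t - 1) * ℓ = (t - 1) * (ℓ - 1) + (t - 1) := by
        conv_lhs => rw [show ℓ = (ℓ - 1) + 1 by omega]
        rw [Nat.mul_add, Nat.mul_one]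
      omega
    rw [Nat.mul_comm] at h2
    omega
  obtain ⟨T, hTW, hTcard⟩ := Finset.exists_subset_card_eq htW
  -- Bonferroni
  have hbonf := bonf_aux (fun w => Cur (r w)) T
  have hL : ∑ w ∈ T, (Cur (r w)).card = t * q ^ (n-1) := by
    rw [Finset.sum_congr rfl (fun w hw => hcard (r w) (hrprop w (hTW hw)).1),
      Finset.sum_const, hTcard, smul_eq_mul]
  have hU : (T.biUnion fun w => Cur (r w)).card ≤ S.card := by
    refine Finset.card_le_card ?_
    intro x hx
    rw [Finset.mem_biUnion] at hx
    obtain ⟨w, -, hxw⟩ := hx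
    exact hCS _ hxw
  have hpair : ∀ p ∈ T.offDiag, q * ((Cur (r p.1)) ∩ (Cur (r p.2))).card ≤ ℓ * q ^ (n-1) := by
    intro p hp
    rw [Finset.mem_offDiag] at hp
    obtain ⟨hp1, hp2, hp12⟩ := hp
    have h1 := hrprop p.1 (hTW hp1)
    have h2 := hrprop p.2 (hTW hp2)
    refine hint _ _ h1.1 h2.1 ?_
    rw [h1.2, h2.2]
    exact hp12
  -- combine, multiplying through by q
  have hoff : T.offDiag.card = t * t - t := by rw [Finset.offDiag_card, hTcard]
  have hkey : 2 * (t * q ^ (n-1)) * q ≤ 2 * S.card * q + (t * t - t) * (ℓ * q ^ (n-1)) := by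
    calc 2 * (t * q ^ (n-1)) * q = (2 * ∑ w ∈ T, (Cur (r w)).card) * q := by rw [hL]
      _ ≤ (2 * (T.biUnion fun w => Cur (r w)).card
            + ∑ p ∈ T.offDiag, ((Cur (r p.1)) ∩ (Cur (r p.2))).card) * q :=
          Nat.mul_le_mul_right _ hbonf
      _ = 2 * (T.biUnion fun w => Cur (r w)).card * q
            + ∑ p ∈ T.offDiag, q * ((Cur (r p.1)) ∩ (Cur (r p.2))).card := by
          rw [Nat.add_mul, Finset.sum_mul]
          congr 1
          exact Finset.sum_congr rfl fun p _ => Nat.mul_comm _ _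
      _ ≤ 2 * S.card * q + ∑ _p ∈ T.offDiag, ℓ * q ^ (n-1) := by
          refine Nat.add_le_add (Nat.mul_le_mul_right _ (Nat.mul_le_mul_left _ hU))
            (Finset.sum_le_sum hpair)
      _ = 2 * S.card * q + (t * t - t) * (ℓ * q ^ (n-1)) := by
          rw [Finset.sum_const, smul_eq_mul, hoff]
  -- derive q ^ n ≤ 2 * ℓ * S.card
  have hQq : q ^ (n-1) * q = q ^ n := by
    rw [← pow_succ]
    congr 1
    omega
  have hSlow : q ^ n ≤ 2 * ℓ * S.card := by
    set Q := q ^ (n-1) with hQ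
    have h5 : (t * t - t) * ℓ ≤ t * (q - 1) := by
      have htt : t * t - t = t * (t - 1) := by
        rw [Nat.mul_sub_one, Nat.mul_comm]
      rw [htt, Nat.mul_assoc]
      exact Nat.mul_le_mul_left _ (by omega)
    have h6 : 2 * t * Q * q ≤ 2 * S.card * q + t * (q - 1) * Q := by
      calc 2 * t * Q * q = 2 * (t * Q) * q := by ring
        _ ≤ 2 * S.card * q + (t * t - t) * (ℓ * Q) := hkey
        _ = 2 * S.card * q + ((t * t - t) * ℓ) * Q := by ring
        _ ≤ 2 * S.card * q + t * (q - 1) * Q := by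
            exact Nat.add_le_add_left (Nat.mul_le_mul_right _ h5) _
    -- multiply by ℓ
    have h7 : 2 * t * Q * q * ℓ ≤ 2 * S.card * q * ℓ + t * (q - 1) * Q * ℓ :=
      by calc 2 * t * Q * q * ℓ ≤ (2 * S.card * q + t * (q - 1) * Q) * ℓ :=
            Nat.mul_le_mul_right _ h6
        _ = 2 * S.card * q * ℓ + t * (q - 1) * Q * ℓ := Nat.add_mul _ _ _
    have h8 : Q * q * q + t * (q - 1) * Q * ℓ ≤ 2 * t * Q * q * ℓ := by
      have ha : Q * q * q ≤ t * ℓ * Q * q := by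
        calc Q * q * q = q * (Q * q) := by ring
          _ ≤ (t * ℓ) * (Q * q) := Nat.mul_le_mul_right _ htq
          _ = t * ℓ * Q * q := by ring
      have hb2 : t * (q - 1) * Q * ℓ ≤ t * q * Q * ℓ := by
        refine Nat.mul_le_mul_right _ (Nat.mul_le_mul_right _ (Nat.mul_le_mul_left _ (by omega)))
      calc Q * q * q + t * (q - 1) * Q * ℓ ≤ t * ℓ * Q * q + t * q * Q * ℓ :=
            Nat.add_le_add ha hb2
        _ = 2 * t * Q * q * ℓ := by ring
    have h9 : Q * q * q ≤ 2 * S.card * q * ℓ := by omega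
    have h10 : (Q * q) * q ≤ (2 * ℓ * S.card) * q := by
      calc (Q * q) * q = Q * q * q := by ring
        _ ≤ 2 * S.card * q * ℓ := h9
        _ = (2 * ℓ * S.card) * q := by ring
    have h11 := Nat.le_of_mul_le_mul_right h10 hq0
    rw [hQ, hQq] at h11
    exact h11
  -- conclude
  have hpow2 : 2 * ℓ ≤ ℓ ^ n := by
    calc 2 * ℓ ≤ ℓ * ℓ := Nat.mul_le_mul_right _ hℓ
      _ = ℓ ^ 2 := (sq ℓ).symm
      _ ≤ ℓ ^ n := Nat.pow_le_pow_right (by omega) hn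
  have hfin : ℓ ^ n * (D + n).choose n ≤ ℓ ^ n * ((M + n - 1).choose n * S.card) := by
    calc ℓ ^ n * (D + n).choose n ≤ q ^ n * (M + n - 1).choose n := part1
      _ ≤ (2 * ℓ * S.card) * (M + n - 1).choose n := Nat.mul_le_mul_right _ hSlow
      _ ≤ (ℓ ^ n * S.card) * (M + n - 1).choose n :=
          Nat.mul_le_mul_right _ (Nat.mul_le_mul_right _ hpow2)
      _ = ℓ ^ n * ((M + n - 1).choose n * S.card) := by ring
  exact Nat.le_of_mul_le_mul_left hfin (by positivity)
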